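/- Assume R_0 > 1 and let ζ = (ζ_k)_{k∈K} be a probability vector with strictly positive entries satisfying ζ^T·diag(R_k)·Q = R_0 ζ^T. Suppose T = (T_k)_{k∈K} with T_k ∈ (0,1) satisfies T_k = R_k(1−T_k)Θ_k for all k, where Θ = Q T. Then Σ_{k∈K} ζ_k T_k ≤ 1 − 1/R_0, with equality if and only if R_k = R_0 for every k ∈ K. -/

import Mathlib

open Matrix

/-- Spectral radius of a real matrix, via its complex spectrum. -/
noncomputable def specRad {n : Type*} [Fintype n] [DecidableEq n] (M : Matrix n n ℝ) : ℝ :=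
  sSup {x : ℝ | ∃ μ : ℂ, μ ∈ spectrum ℂ (M.map Complex.ofReal) ∧ x = ‖μ‖}

/-- Tangent-line decomposition of the convex function `x ↦ x/(1-x)` at `s`. -/
lemma tangent_decomp (x s : ℝ) (hx : x ≠ 1) (hs : s ≠ 1) :
    x / (1 - x) = s / (1 - s) + (x - s) / (1 - s) ^ 2
      + (x - s) ^ 2 / ((1 - x) * (1 - s) ^ 2) := by
  have h1 : (1 : ℝ) - x ≠ 0 := sub_ne_zero.mpr (Ne.symm hx)
  have h2 : (1 : ℝ) - s ≠ 0 := sub_ne_zero.mpr (Ne.symm hs)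
  field_simp
  ring

/-- Effect of heterogeneity on the prevalence: at the endemic equilibrium of the
structured SIS model, the ζ-weighted mean prevalence is at most `1 - 1/R₀`, with
equality iff all `R_k` equal `R₀`. -/
theorem heterogeneity_lowers_prevalence {K : Type*} [Fintype K] [DecidableEq K] [Nonempty K]
    (R : K → ℝ) (hR : ∀ k, 0 < R k)
    (Q : Matrix K K ℝ) (hQ : ∀ k s, 0 ≤ Q k s)
    (hQirr : ∀ k s, ∃ n : ℕ, 1 ≤ n ∧ 0 < (Q ^ n) k s)
    (hQrow : ∀ k, ∑ s, Q k s = 1)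
    (R₀ : ℝ) (hR₀ : R₀ = specRad (Matrix.diagonal R * Q)) (hR₀gt : 1 < R₀)
    (ζ : K → ℝ) (hζpos : ∀ k, 0 < ζ k) (hζsum : ∑ k, ζ k = 1)
    (hζeig : Matrix.vecMul ζ (Matrix.diagonal R * Q) = R₀ • ζ)
    (T Θ : K → ℝ) (hT : ∀ k, T k ∈ Set.Ioo (0:ℝ) 1)
    (hΘ : Θ = Q.mulVec T)
    (hfix : ∀ k, T k = R k * (1 - T k) * Θ k) :
    (∑ k, ζ k * T k) ≤ 1 - 1 / R₀ ∧
    ((∑ k, ζ k * T k) = 1 - 1 / R₀ ↔ ∀ k, R k = R₀) := by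
  have hT0 : ∀ k, 0 < T k := fun k => (hT k).1
  have hT1 : ∀ k, T k < 1 := fun k => (hT k).2
  have hR₀pos : 0 < R₀ := by linarith
  set S := ∑ k, ζ k * T k with hSdef
  have hSpos : 0 < S := Finset.sum_pos (fun k _ => mul_pos (hζpos k) (hT0 k))
    Finset.univ_nonempty
  have hSlt : S < 1 := by
    calc S < ∑ k, ζ k := Finset.sum_lt_sum_of_nonempty Finset.univ_nonempty
          (fun k _ => by nlinarith [hζpos k, hT1 k])
      _ = 1 := hζsum
  have h1S : 0 < 1 - S := by linarith
  -- the eigenvalue relation, columnwise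
  have heig : ∀ s, ∑ k, ζ k * (R k * Q k s) = R₀ * ζ s := by
    intro s
    have h := congrFun hζeig s
    simpa [Matrix.vecMul, dotProduct, Matrix.diagonal_mul, Pi.smul_apply,
      smul_eq_mul] using h
  -- key weighted sum identity
  have hΘk : ∀ k, Θ k = ∑ s, Q k s * T s := by
    intro k; rw [hΘ]; rfl
  have hsum1 : ∑ k, ζ k * (R k * Θ k) = R₀ * S := by
    calc ∑ k, ζ k * (R k * Θ k)
        = ∑ k, ∑ s, ζ k * (R k * Q k s) * T s := by
          refine Finset.sum_congr rfl fun k _ => ?_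
          rw [hΘk k, Finset.mul_sum]
          rw [Finset.mul_sum]
          exact Finset.sum_congr rfl fun s _ => by ring
      _ = ∑ s, ∑ k, ζ k * (R k * Q k s) * T s := Finset.sum_comm
      _ = ∑ s, (∑ k, ζ k * (R k * Q k s)) * T s := by
          exact Finset.sum_congr rfl fun s _ => (Finset.sum_mul ..).symm
      _ = ∑ s, R₀ * (ζ s * T s) := by
          exact Finset.sum_congr rfl fun s _ => by rw [heig s]; ring
      _ = R₀ * S := by rw [← Finset.mul_sum]
  have hterm : ∀ k, ζ k * (R k * Θ k) = ζ k * (T k / (1 - T k)) := by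
    intro k
    have h1 : (1 : ℝ) - T k ≠ 0 := ne_of_gt (by linarith [hT1 k])
    have : R k * Θ k = T k / (1 - T k) := by
      rw [eq_div_iff h1]
      linear_combination -(hfix k)
    rw [this]
  -- the decomposition R₀ S = S/(1-S) + E with E ≥ 0
  set E := ∑ k, ζ k * ((T k - S) ^ 2 / ((1 - T k) * (1 - S) ^ 2)) with hEdef
  have hEterm_nonneg : ∀ k ∈ Finset.univ,
      0 ≤ ζ k * ((T k - S) ^ 2 / ((1 - T k) * (1 - S) ^ 2)) := by
    intro k _
    have h1 : (0:ℝ) < (1 - T k) * (1 - S) ^ 2 :=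
      mul_pos (by linarith [hT1 k]) (pow_pos h1S 2)
    exact mul_nonneg (hζpos k).le (div_nonneg (sq_nonneg _) h1.le)
  have hEnn : 0 ≤ E := Finset.sum_nonneg hEterm_nonneg
  have hdecomp : R₀ * S = S / (1 - S) + E := by
    have h1 : ∑ k, ζ k * (T k / (1 - T k))
        = ∑ k, (ζ k * (S / (1 - S)) + ζ k * ((T k - S) / (1 - S) ^ 2)
            + ζ k * ((T k - S) ^ 2 / ((1 - T k) * (1 - S) ^ 2))) := by
      refine Finset.sum_congr rfl fun k _ => ?_
      rw [tangent_decomp (T k) S (ne_of_lt (hT1 k)) (ne_of_lt hSlt)]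
      ring
    have h2 : ∑ k, ζ k * (T k - S) = 0 := by
      have : ∑ k, ζ k * (T k - S) = (∑ k, ζ k * T k) - (∑ k, ζ k) * S := by
        rw [Finset.sum_mul, ← Finset.sum_sub_distrib]
        exact Finset.sum_congr rfl fun k _ => by ring
      rw [this, hζsum, one_mul]; simp [hSdef]
    calc R₀ * S = ∑ k, ζ k * (R k * Θ k) := hsum1.symm
      _ = ∑ k, ζ k * (T k / (1 - T k)) := Finset.sum_congr rfl fun k _ => hterm k
      _ = (∑ k, ζ k * (S / (1 - S))) + (∑ k, ζ k * ((T k - S) / (1 - S) ^ 2)) + E := by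
          rw [h1, Finset.sum_add_distrib, Finset.sum_add_distrib]
      _ = S / (1 - S) + E := by
          have ha : ∑ k, ζ k * (S / (1 - S)) = S / (1 - S) := by
            rw [← Finset.sum_mul, hζsum, one_mul]
          have hb : ∑ k, ζ k * ((T k - S) / (1 - S) ^ 2) = 0 := by
            have : ∑ k, ζ k * ((T k - S) / (1 - S) ^ 2)
                = (∑ k, ζ k * (T k - S)) / (1 - S) ^ 2 := by
              rw [Finset.sum_div]
              exact Finset.sum_congr rfl fun k _ => by ring
            rw [this, h2, zero_div]
          rw [ha, hb, add_zero]
  -- main inequality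
  have hmain : S ≤ 1 - 1 / R₀ := by
    have h3 : S / (1 - S) ≤ R₀ * S := by linarith
    rw [div_le_iff₀ h1S] at h3
    have h4 : 1 ≤ R₀ * (1 - S) := by nlinarith
    have h5 : 1 / R₀ ≤ 1 - S := by
      rw [div_le_iff₀ hR₀pos]; nlinarith
    linarith
  refine ⟨hmain, ?_, ?_⟩
  · -- equality → all R k = R₀
    intro heq
    have hE0 : E = 0 := by
      have h1 : S / (1 - S) = R₀ * S := by
        have : 1 - S = 1 / R₀ := by rw [heq]; ring
        rw [this]
        field_simp
      linarith
    have hall : ∀ k, T k = S := by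
      intro k
      have := (Finset.sum_eq_zero_iff_of_nonneg hEterm_nonneg).mp hE0 k (Finset.mem_univ k)
      have h1 : (0:ℝ) < (1 - T k) * (1 - S) ^ 2 :=
        mul_pos (by linarith [hT1 k]) (pow_pos h1S 2)
      have h2 : (T k - S) ^ 2 / ((1 - T k) * (1 - S) ^ 2) = 0 := by
        rcases mul_eq_zero.mp this with h | h
        · exact absurd h (ne_of_gt (hζpos k))
        · exact h
      have h3 : (T k - S) ^ 2 = 0 :=
        (div_eq_zero_iff.mp h2).resolve_right (ne_of_gt h1)
      have h4 := sq_eq_zero_iff.mp h3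
      linarith
    intro k
    have hΘS : Θ k = S := by
      rw [hΘk k]
      calc ∑ s, Q k s * T s = ∑ s, Q k s * S :=
            Finset.sum_congr rfl fun s _ => by rw [hall s]
        _ = (∑ s, Q k s) * S := (Finset.sum_mul ..).symm
        _ = S := by rw [hQrow k, one_mul]
    have hfk := hfix k
    rw [hall k, hΘS] at hfk
    -- S = R k * (1 - S) * S, and 1 - S = 1/R₀
    have h1S' : 1 - S = 1 / R₀ := by rw [heq]; ring
    have hr1 : R k * (1 - S) = 1 := by
      have hS0 : S ≠ 0 := ne_of_gt hSpos
      apply mul_right_cancel₀ hS0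
      rw [one_mul]
      linear_combination -hfk
    rw [h1S'] at hr1
    field_simp at hr1
    linarith
  · -- all R k = R₀ → equality
    intro hRk
    have hconst : ∀ k, T k = 1 - 1 / R₀ := by
      obtain ⟨m, _, hm⟩ := Finset.exists_max_image Finset.univ T Finset.univ_nonempty
      obtain ⟨m', _, hm'⟩ := Finset.exists_min_image Finset.univ T Finset.univ_nonempty
      have hΘm : Θ m ≤ T m := by
        rw [hΘk m]
        calc ∑ s, Q m s * T s ≤ ∑ s, Q m s * T m :=
              Finset.sum_le_sum fun s _ =>
                mul_le_mul_of_nonneg_left (hm s (Finset.mem_univ s)) (hQ m s)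
          _ = T m := by rw [← Finset.sum_mul, hQrow m, one_mul]
      have hΘm' : T m' ≤ Θ m' := by
        rw [hΘk m']
        calc T m' = ∑ s, Q m' s * T m' := by rw [← Finset.sum_mul, hQrow m', one_mul]
          _ ≤ ∑ s, Q m' s * T s :=
              Finset.sum_le_sum fun s _ =>
                mul_le_mul_of_nonneg_left (hm' s (Finset.mem_univ s)) (hQ m' s)
      have hfm := hfix m; rw [hRk m] at hfm
      have hfm' := hfix m'; rw [hRk m'] at hfm'
      have hub : T m ≤ 1 - 1 / R₀ := by
        have h0 : (0:ℝ) ≤ R₀ * (1 - T m) := mul_nonneg hR₀pos.le (by linarith [hT1 m])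
        have key : R₀ * (1 - T m) * Θ m ≤ R₀ * (1 - T m) * T m :=
          mul_le_mul_of_nonneg_left hΘm h0
        have h1 : 1 ≤ R₀ * (1 - T m) := by nlinarith [hT0 m, key, hfm]
        have h2 : 1 / R₀ ≤ 1 - T m := by rw [div_le_iff₀ hR₀pos]; nlinarith
        linarith
      have hlb : 1 - 1 / R₀ ≤ T m' := by
        have h0 : (0:ℝ) ≤ R₀ * (1 - T m') := mul_nonneg hR₀pos.le (by linarith [hT1 m'])
        have key : R₀ * (1 - T m') * T m' ≤ R₀ * (1 - T m') * Θ m' :=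
          mul_le_mul_of_nonneg_left hΘm' h0
        have h1 : R₀ * (1 - T m') ≤ 1 := by nlinarith [hT0 m', key, hfm']
        have h2 : 1 - T m' ≤ 1 / R₀ := by rw [le_div_iff₀ hR₀pos]; nlinarith
        linarith
      intro k
      have hk1 := hm k (Finset.mem_univ k)
      have hk2 := hm' k (Finset.mem_univ k)
      linarith
    calc S = ∑ k, ζ k * (1 - 1 / R₀) :=
          Finset.sum_congr rfl fun k _ => by rw [hconst k]
      _ = (∑ k, ζ k) * (1 - 1 / R₀) := (Finset.sum_mul ..).symm
      _ = 1 - 1 / R₀ := by rw [hζsum, one_mul]
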